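/- Let f̄ > 0 and 0 ≤ d < f̄. Let J1' and J3' be disjoint finite index sets and let f be a real-valued assignment on J1' ∪ J3' such that ∑_{j ∈ J1' ∪ J3'} f_j = d and −f̄ ≤ f_j ≤ f̄ for all j ∈ J1' ∪ J3'. Then ∑_{j ∈ J1'} f_j ≥ d − (f̄ − d)·|J1'| − d·|J3'|. -/

import Mathlib

open scoped BigOperators

/-- the key LP bound used in the validity proof of the partition
inequalities. -/
theorem lp_lower_bound {ι : Type*} [DecidableEq ι]
    (fbar d : ℝ) (hfbar : 0 < fbar) (hd0 : 0 ≤ d) (hd : d < fbar)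
    (J1 J3 : Finset ι) (hdisj : Disjoint J1 J3)
    (f : ι → ℝ)
    (hsum : (∑ j ∈ J1 ∪ J3, f j) = d)
    (hbnd : ∀ j ∈ J1 ∪ J3, -fbar ≤ f j ∧ f j ≤ fbar) :
    (∑ j ∈ J1, f j) ≥ d - (fbar - d) * (J1.card : ℝ) - d * (J3.card : ℝ) := by
  rw [Finset.sum_union hdisj] at hsum
  have h3u : (∑ j ∈ J3, f j) ≤ fbar * J3.card := by
    calc (∑ j ∈ J3, f j) ≤ ∑ _j ∈ J3, fbar :=
          Finset.sum_le_sum (fun j hj => (hbnd j (Finset.mem_union_right _ hj)).2)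
      _ = fbar * J3.card := by rw [Finset.sum_const, nsmul_eq_mul, mul_comm]
  have h1l : -fbar * J1.card ≤ (∑ j ∈ J1, f j) := by
    calc (-fbar) * J1.card = ∑ _j ∈ J1, (-fbar) := by
          rw [Finset.sum_const, nsmul_eq_mul, mul_comm]
      _ ≤ ∑ j ∈ J1, f j :=
          Finset.sum_le_sum (fun j hj => (hbnd j (Finset.mem_union_left _ hj)).1)
  rcases le_or_gt J3.card J1.card with h | h
  · have hc : (J3.card : ℝ) ≤ J1.card := by exact_mod_cast h
    nlinarith [mul_nonneg (le_of_lt (sub_pos.mpr hd)) (sub_nonneg.mpr hc)]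
  · have hc : (J1.card : ℝ) + 1 ≤ J3.card := by exact_mod_cast h
    nlinarith [mul_nonneg hd0 (by linarith : (0:ℝ) ≤ (J3.card : ℝ) - J1.card - 1)]
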